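/- The sequence b has a linear representation: for every n ≥ 1, b(n) = wᵀ · B_{i₀}···B_{i_s} · v, where i_s···i₀ is the base-3 expansion of n, w = (1,0)ᵀ, v = (0,1)ᵀ, B₀ = [[1,0],[√2,1]], B₁ = [[√2,1],[1,√2]], B₂ = [[1,√2],[0,1]]. -/

import Mathlib

/-- The matrices of the linear representation of Northshield's sequence. -/
noncomputable def B (d : ℕ) : Matrix (Fin 2) (Fin 2) ℝ :=
  if d = 0 then !![1, 0; Real.sqrt 2, 1]
  else if d = 1 then !![Real.sqrt 2, 1; 1, Real.sqrt 2]
  else !![1, Real.sqrt 2; 0, 1]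

theorem northshield_linear_representation (b : ℕ → ℝ)
    (hb0 : b 0 = 0) (hb1 : b 1 = 1)
    (hrec0 : ∀ n : ℕ, b (3 * n) = b n)
    (hrec1 : ∀ n : ℕ, b (3 * n + 1) = Real.sqrt 2 * b n + b (n + 1))
    (hrec2 : ∀ n : ℕ, b (3 * n + 2) = b n + Real.sqrt 2 * b (n + 1)) :
    ∀ n : ℕ, 1 ≤ n →
      b n = dotProduct ![1, 0]
        ((((Nat.digits 3 n).map B).prod).mulVec ![0, 1]) := by
  have key : ∀ n : ℕ,
      (((Nat.digits 3 n).map B).prod).mulVec ![0, 1] = ![b n, b (n + 1)] := by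
    intro n
    induction n using Nat.strong_induction_on with
    | _ n ih =>
      rcases Nat.eq_zero_or_pos n with h | h
      · subst h
        simp [hb0, hb1]
      · rw [Nat.digits_def' (by norm_num : 1 < 3) h]
        simp only [List.map_cons, List.prod_cons]
        rw [← Matrix.mulVec_mulVec, ih (n / 3) (Nat.div_lt_self h (by norm_num))]
        have hn : n = 3 * (n / 3) + n % 3 := (Nat.div_add_mod n 3).symm
        have hr : n % 3 < 3 := Nat.mod_lt _ (by norm_num)
        set q := n / 3
        interval_cases h' : n % 3
        · rw [show n = 3 * q by omega]
          funext i; fin_cases i <;>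
            simp [B, Matrix.mulVec, dotProduct, Fin.sum_univ_two,
              hrec0, hrec1]
        · rw [show n = 3 * q + 1 by omega]
          funext i; fin_cases i <;>
            simp [B, Matrix.mulVec, dotProduct, Fin.sum_univ_two,
              hrec1, hrec2]
        · rw [show n = 3 * q + 2 by omega]
          have h3 : 3 * q + 2 + 1 = 3 * (q + 1) := by ring
          funext i; fin_cases i <;>
            simp [B, Matrix.mulVec, dotProduct, Fin.sum_univ_two,
              hrec2, h3, hrec0]
  intro n _
  rw [key n]
  simp [dotProduct, Fin.sum_univ_two]
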